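/- For all n ≥ 0 and k ≥ 0, the number f_{n,k} of meanders with catastrophes of length n ending at altitude k equals the sum over m = 0, …, n of d_m times the number of catastrophe-free meanders of length n−m ending at altitude k, where d_m is the number of excursions with catastrophes of length m that are either empty (m = 0) or whose final step is a catastrophe. -/

import Mathlib

/-- Validity of a path with catastrophes over the jump set `J`, starting from
altitude `h`: each step is either a jump `s ∈ J` keeping the altitude
nonnegative, or a catastrophe `s = -h` from an altitude `h > 0` with `-h ∉ J`
(landing at altitude `0`). -/
def CatValidFrom (J : Finset ℤ) : ℤ → List ℤ → Prop
  | _, [] => True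
  | h, s :: r =>
    ((s ∈ J ∧ 0 ≤ h + s) ∨ (s = -h ∧ 0 < h ∧ -h ∉ J)) ∧ CatValidFrom J (h + s) r

/-- Validity of a catastrophe-free meander over the jump set `J`, starting from
altitude `h`: every step belongs to `J` and all partial altitudes are
nonnegative. -/
def FreeFrom (J : Finset ℤ) : ℤ → List ℤ → Prop
  | _, [] => True
  | h, s :: r => (s ∈ J ∧ 0 ≤ h + s) ∧ FreeFrom J (h + s) r

/-- The last step of `l` (a path starting at altitude `0`) is a catastrophe:
`l` ends with the jump `-h` where `h > 0` is the altitude reached before the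
last step and `-h ∉ J`. -/
def EndsWithCat (J : Finset ℤ) (l : List ℤ) : Prop :=
  ∃ l' : List ℤ, l = l' ++ [-l'.sum] ∧ 0 < l'.sum ∧ -l'.sum ∉ J

/-- The number `d m` of excursions with catastrophes of length `m` that are
either empty or whose final step is a catastrophe. -/
noncomputable def dCount (J : Finset ℤ) (m : ℕ) : ℕ :=
  Nat.card {l : List ℤ //
    l.length = m ∧ CatValidFrom J 0 l ∧ l.sum = 0 ∧ (l = [] ∨ EndsWithCat J l)}

/-- The number of catastrophe-free meanders of length `n` ending at
altitude `k`. -/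
noncomputable def freeMCount (J : Finset ℤ) (n : ℕ) (k : ℤ) : ℕ :=
  Nat.card {l : List ℤ // l.length = n ∧ FreeFrom J 0 l ∧ l.sum = k}

namespace MeanderAux

variable {J : Finset ℤ}

lemma catValid_append : ∀ (a b : List ℤ) (h : ℤ),
    CatValidFrom J h (a ++ b) ↔ CatValidFrom J h a ∧ CatValidFrom J (h + a.sum) b := by
  intro a
  induction a with
  | nil => intro b h; simp [CatValidFrom]
  | cons s r ih =>
      intro b h
      simp only [List.cons_append, CatValidFrom, List.sum_cons, List.append_eq, ih,
        ← add_assoc]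
      tauto

lemma freeFrom_mem : ∀ (l : List ℤ) (h : ℤ), FreeFrom J h l → ∀ s ∈ l, s ∈ J := by
  intro l
  induction l with
  | nil => simp
  | cons s r ih =>
      intro h hf t ht
      rcases hf with ⟨⟨hs, _⟩, hr⟩
      rcases List.mem_cons.1 ht with rfl | ht
      · exact hs
      · exact ih _ hr t ht

lemma free_of_cat_mem : ∀ (l : List ℤ) (h : ℤ), CatValidFrom J h l →
    (∀ s ∈ l, s ∈ J) → FreeFrom J h l := by
  intro l
  induction l with
  | nil => intro h _ _; trivial
  | cons s r ih =>
      intro h hc hm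
      rcases hc with ⟨hstep, hr⟩
      have hs : s ∈ J := hm s (by simp)
      refine ⟨⟨hs, ?_⟩, ih _ hr fun t ht => hm t (by simp [ht])⟩
      rcases hstep with ⟨_, h2⟩ | ⟨rfl, _, hns⟩
      · exact h2
      · exact absurd hs hns

lemma cat_of_free : ∀ (l : List ℤ) (h : ℤ), FreeFrom J h l → CatValidFrom J h l := by
  intro l
  induction l with
  | nil => intro h _; trivial
  | cons s r ih =>
      intro h hf
      exact ⟨Or.inl hf.1, ih _ hf.2⟩

lemma finCat : ∀ (n : ℕ) (h : ℤ), {l : List ℤ | l.length = n ∧ CatValidFrom J h l}.Finite := by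
  intro n
  induction n with
  | zero =>
      intro h
      refine (Set.finite_singleton ([] : List ℤ)).subset ?_
      rintro l ⟨hl, -⟩
      simp [List.length_eq_zero_iff.1 hl]
  | succ n ih =>
      intro h
      refine Set.Finite.subset (Set.Finite.biUnion (Finset.finite_toSet (insert (-h) J))
        (fun s _ => ((ih (h + s)).image (List.cons s)))) ?_
      rintro l ⟨hl, hc⟩
      rcases l with _ | ⟨s, r⟩
      · simp at hl
      · rcases hc with ⟨hstep, hr⟩
        have hs : s ∈ (insert (-h) J : Finset ℤ) := by
          rcases hstep with ⟨h1, _⟩ | ⟨rfl, _, _⟩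
          · simp [h1]
          · simp
        exact Set.mem_biUnion hs ⟨r, ⟨by simpa using hl, hr⟩, rfl⟩

/-- Uniqueness of decomposition: lengths agree. -/
lemma decomp_len {e1 f1 e2 f2 : List ℤ}
    (heq : e1 ++ f1 = e2 ++ f2)
    (he1 : e1 = [] ∨ ∃ e' a, e1 = e' ++ [a] ∧ a ∉ J)
    (hf1 : ∀ s ∈ f1, s ∈ J)
    (he2 : e2 = [] ∨ ∃ e' a, e2 = e' ++ [a] ∧ a ∉ J)
    (hf2 : ∀ s ∈ f2, s ∈ J) : e1.length = e2.length := by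
  by_contra hne
  -- wlog-style: a helper
  have key : ∀ (e1 f1 e2 f2 : List ℤ), e1 ++ f1 = e2 ++ f2 →
      (∀ s ∈ f1, s ∈ J) →
      (e2 = [] ∨ ∃ e' a, e2 = e' ++ [a] ∧ a ∉ J) →
      e1.length < e2.length → False := by
    intro e1 f1 e2 f2 heq hf1 he2 hlt
    rcases he2 with rfl | ⟨e', a, rfl, ha⟩
    · simp at hlt
    · -- element at index e'.length of the combined list is `a`, but lies in f1
      have h1 : (e' ++ ([a] ++ f2))[e'.length]? = some a := by
        rw [List.getElem?_append_right le_rfl]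
        simp
      have hlen : e1.length ≤ e'.length := by
        simp only [List.length_append, List.length_cons, List.length_nil] at hlt
        omega
      have h2 : (e1 ++ f1)[e'.length]? = f1[e'.length - e1.length]? :=
        List.getElem?_append_right hlen
      rw [heq, List.append_assoc, h1] at h2
      have : a ∈ f1 := List.mem_iff_getElem?.2 ⟨_, h2.symm⟩
      exact ha (hf1 a this)
  rcases Nat.lt_or_ge e1.length e2.length with h | h
  · exact key e1 f1 e2 f2 heq hf1 he2 h
  · exact key e2 f2 e1 f1 heq.symm hf2 he1 (lt_of_le_of_ne h (by omega))

lemma decomp_unique {e1 f1 e2 f2 : List ℤ}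
    (heq : e1 ++ f1 = e2 ++ f2)
    (he1 : e1 = [] ∨ ∃ e' a, e1 = e' ++ [a] ∧ a ∉ J)
    (hf1 : ∀ s ∈ f1, s ∈ J)
    (he2 : e2 = [] ∨ ∃ e' a, e2 = e' ++ [a] ∧ a ∉ J)
    (hf2 : ∀ s ∈ f2, s ∈ J) : e1 = e2 ∧ f1 = f2 :=
  List.append_inj heq (decomp_len heq he1 hf1 he2 hf2)

/-- shape condition from D-membership -/
lemma shape_of_D {e : List ℤ} (h : e = [] ∨ EndsWithCat J e) :
    e = [] ∨ ∃ e' a, e = e' ++ [a] ∧ a ∉ J := by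
  rcases h with rfl | ⟨l', rfl, _, hn⟩
  · exact Or.inl rfl
  · exact Or.inr ⟨l', -l'.sum, rfl, hn⟩

/-- Existence of decomposition. -/
lemma decomp_exists {l : List ℤ} (hc : CatValidFrom J 0 l) :
    ∃ e f : List ℤ, l = e ++ f ∧
      CatValidFrom J 0 e ∧ e.sum = 0 ∧ (e = [] ∨ EndsWithCat J e) ∧
      FreeFrom J 0 f := by
  classical
  set p : ℤ → Bool := fun s => decide (s ∈ J) with hp
  set f : List ℤ := (l.reverse.takeWhile p).reverse with hf
  set e : List ℤ := (l.reverse.dropWhile p).reverse with he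
  have hsplit : l = e ++ f := by
    rw [he, hf, ← List.reverse_append, List.takeWhile_append_dropWhile, List.reverse_reverse]
  have hfm : ∀ s ∈ f, s ∈ J := by
    intro s hs
    have := List.mem_takeWhile_imp (by simpa [hf] using hs)
    simpa [hp] using this
  have hshape : e = [] ∨ ∃ e' a, e = e' ++ [a] ∧ a ∉ J := by
    rcases eq_or_ne (l.reverse.dropWhile p) [] with hnil | hne
    · left; simp [he, hnil]
    · right
      refine ⟨((l.reverse.dropWhile p).tail).reverse, (l.reverse.dropWhile p).head hne, ?_, ?_⟩
      · rw [he]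
        conv_lhs => rw [← List.cons_head_tail hne]
        simp
      · have := List.head_dropWhile_not p (l := l.reverse) hne
        simpa [hp] using this
  clear_value e f
  clear he hf
  rw [hsplit] at hc
  rw [catValid_append] at hc
  obtain ⟨hce, hcf⟩ := hc
  have hes : e.sum = 0 ∧ (e = [] ∨ EndsWithCat J e) := by
    rcases hshape with rfl | ⟨e', a, rfl, ha⟩
    · exact ⟨rfl, Or.inl rfl⟩
    · have := (catValid_append e' [a] 0).1 hce
      obtain ⟨hce', hstep⟩ := this
      rcases hstep.1 with ⟨haJ, _⟩ | ⟨ha1, ha2, ha3⟩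
      · exact absurd haJ ha
      · constructor
        · simp [ha1]
        · right
          exact ⟨e', by simp [ha1], by omega, by simpa using ha3⟩
  refine ⟨e, f, hsplit, hce, hes.1, hes.2, ?_⟩
  have : CatValidFrom J 0 f := by
    have := hcf
    rw [hes.1] at this
    simpa using this
  exact free_of_cat_mem f 0 this hfm

end MeanderAux


/-- **Decomposition of meanders with catastrophes.** The number `f n k` of
meanders with catastrophes of length `n` ending at altitude `k` equals
`∑_{m=0}^{n} d m · (number of catastrophe-free meanders of length n-m ending
at altitude k)`. -/
theorem meandersCat_eq_sum (J : Finset ℤ) (hJ : J.Nonempty) (n : ℕ) (k : ℕ) :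
    Nat.card {l : List ℤ // l.length = n ∧ CatValidFrom J 0 l ∧ l.sum = (k : ℤ)} =
      ∑ m ∈ Finset.range (n + 1), dCount J m * freeMCount J (n - m) (k : ℤ) := by
  classical
  open MeanderAux in
  -- the sets
  set A : Set (List ℤ) := {l | l.length = n ∧ CatValidFrom J 0 l ∧ l.sum = (k : ℤ)} with hA
  set D : ℕ → Set (List ℤ) := fun m =>
    {l | l.length = m ∧ CatValidFrom J 0 l ∧ l.sum = 0 ∧ (l = [] ∨ EndsWithCat J l)} with hD
  set F : ℕ → Set (List ℤ) := fun m =>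
    {l | l.length = m ∧ FreeFrom J 0 l ∧ l.sum = (k : ℤ)} with hF
  have hAfin : A.Finite := (MeanderAux.finCat n 0).subset (by rintro l ⟨h1, h2, _⟩; exact ⟨h1, h2⟩)
  have hDfin : ∀ m, (D m).Finite := fun m =>
    (MeanderAux.finCat m 0).subset (by rintro l ⟨h1, h2, _⟩; exact ⟨h1, h2⟩)
  have hFfin : ∀ m, (F m).Finite := fun m =>
    (MeanderAux.finCat m 0).subset
      (by rintro l ⟨h1, h2, _⟩; exact ⟨h1, MeanderAux.cat_of_free l 0 h2⟩)
  -- set equality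
  have hAeq : A = ⋃ m ∈ Finset.range (n + 1),
      (fun p : List ℤ × List ℤ => p.1 ++ p.2) '' (D m ×ˢ F (n - m)) := by
    ext l
    constructor
    · rintro ⟨hlen, hc, hsum⟩
      obtain ⟨e, f, rfl, hce, hes, hesh, hff⟩ := MeanderAux.decomp_exists hc
      simp only [List.length_append] at hlen
      refine Set.mem_iUnion₂.2
        ⟨e.length, Finset.mem_range.2 (by omega), ⟨(e, f), ⟨?_, ?_⟩, rfl⟩⟩
      · exact ⟨rfl, hce, hes, hesh⟩
      · refine ⟨?_, hff, ?_⟩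
        · simp only []
          omega
        · simp only [List.sum_append, hes, zero_add] at hsum ⊢; exact hsum
    · intro hl
      simp only [Set.mem_iUnion, Set.mem_image, Set.mem_prod] at hl
      obtain ⟨m, hm, ⟨e, f⟩, ⟨⟨hel, hec, hesum, _⟩, ⟨hfl, hfc, hfsum⟩⟩, rfl⟩ := hl
      have hmn : m ≤ n := by
        have := Finset.mem_range.1 hm
        omega
      refine ⟨?_, ?_, ?_⟩
      · simp [hel, hfl]; omega
      · rw [MeanderAux.catValid_append]
        exact ⟨hec, by simpa [hesum] using MeanderAux.cat_of_free f 0 hfc⟩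
      · simp [hesum, hfsum]
  -- counting
  have key : ∀ (P : List ℤ → Prop) {s : Set (List ℤ)} (hs : s.Finite), (∀ l, P l ↔ l ∈ s) →
      Nat.card {l : List ℤ // P l} = hs.toFinset.card := by
    intro P s hs h
    rw [← Set.ncard_eq_toFinset_card _ hs, ← Nat.card_coe_set_eq]
    exact Nat.card_congr (Equiv.subtypeEquivRight h)
  rw [key (fun l => l.length = n ∧ CatValidFrom J 0 l ∧ l.sum = (k : ℤ)) hAfin (fun l => Iff.rfl)]
  have hto : hAfin.toFinset = (Finset.range (n + 1)).biUnion
      (fun m => (((hDfin m).toFinset ×ˢ (hFfin (n - m)).toFinset).image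
        (fun p : List ℤ × List ℤ => p.1 ++ p.2))) := by
    ext l
    simp only [Set.Finite.mem_toFinset, Finset.mem_biUnion, Finset.mem_image,
      Finset.mem_product, Finset.mem_range, Set.Finite.mem_toFinset]
    constructor
    · intro hl
      rw [hAeq] at hl
      obtain ⟨m, hm, ⟨e, f⟩, ⟨he, hf⟩, rfl⟩ := Set.mem_iUnion₂.1 hl
      exact ⟨m, Finset.mem_range.1 hm, (e, f), ⟨he, hf⟩, rfl⟩
    · rintro ⟨m, hm, ⟨e, f⟩, ⟨he, hf⟩, rfl⟩
      rw [hAeq]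
      exact Set.mem_iUnion₂.2 ⟨m, Finset.mem_range.2 hm, ⟨(e, f), ⟨he, hf⟩, rfl⟩⟩
  -- shape extraction
  have shapeD : ∀ m l, l ∈ D m → l = [] ∨ ∃ e' a, l = e' ++ [a] ∧ a ∉ J := by
    rintro m l ⟨-, -, -, h⟩
    exact MeanderAux.shape_of_D h
  have memF : ∀ m l, l ∈ F m → ∀ s ∈ l, s ∈ J := by
    rintro m l ⟨-, h, -⟩
    exact MeanderAux.freeFrom_mem l 0 h
  have hdisj : ∀ m1 ∈ Finset.range (n + 1), ∀ m2 ∈ Finset.range (n + 1), m1 ≠ m2 →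
      Disjoint (((hDfin m1).toFinset ×ˢ (hFfin (n - m1)).toFinset).image
        (fun p : List ℤ × List ℤ => p.1 ++ p.2))
        (((hDfin m2).toFinset ×ˢ (hFfin (n - m2)).toFinset).image
        (fun p : List ℤ × List ℤ => p.1 ++ p.2)) := by
    intro m1 _ m2 _ hne
    rw [Finset.disjoint_left]
    rintro l h1 h2
    obtain ⟨⟨e1, f1⟩, hp1, heq1⟩ := Finset.mem_image.1 h1
    obtain ⟨⟨e2, f2⟩, hp2, heq2⟩ := Finset.mem_image.1 h2
    obtain ⟨he1, hf1⟩ := Finset.mem_product.1 hp1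
    obtain ⟨he2, hf2⟩ := Finset.mem_product.1 hp2
    have he1' := Set.Finite.mem_toFinset _ |>.1 he1
    have hf1' := Set.Finite.mem_toFinset _ |>.1 hf1
    have he2' := Set.Finite.mem_toFinset _ |>.1 he2
    have hf2' := Set.Finite.mem_toFinset _ |>.1 hf2
    have hlen := MeanderAux.decomp_len (J := J) (heq1.trans heq2.symm)
      (shapeD _ _ he1') (memF _ _ hf1') (shapeD _ _ he2') (memF _ _ hf2')
    rw [he1'.1, he2'.1] at hlen
    exact hne hlen
  rw [hto, Finset.card_biUnion hdisj]
  refine Finset.sum_congr rfl fun m hm => ?_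
  have hinj : Set.InjOn (fun p : List ℤ × List ℤ => p.1 ++ p.2)
      ((((hDfin m).toFinset ×ˢ (hFfin (n - m)).toFinset) : Finset (List ℤ × List ℤ)) :
        Set (List ℤ × List ℤ)) := by
    rintro ⟨e1, f1⟩ hp1 ⟨e2, f2⟩ hp2 heq
    obtain ⟨he1, hf1⟩ := Finset.mem_product.1 hp1
    obtain ⟨he2, hf2⟩ := Finset.mem_product.1 hp2
    have he1' := Set.Finite.mem_toFinset _ |>.1 he1
    have hf1' := Set.Finite.mem_toFinset _ |>.1 hf1
    have he2' := Set.Finite.mem_toFinset _ |>.1 he2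
    have hf2' := Set.Finite.mem_toFinset _ |>.1 hf2
    have := MeanderAux.decomp_unique (J := J) heq
      (shapeD _ _ he1') (memF _ _ hf1') (shapeD _ _ he2') (memF _ _ hf2')
    simpa [Prod.ext_iff] using this
  rw [Finset.card_image_of_injOn hinj, Finset.card_product]
  rw [dCount, freeMCount,
    key (fun l => l.length = m ∧ CatValidFrom J 0 l ∧ l.sum = 0 ∧ (l = [] ∨ EndsWithCat J l))
      (hDfin m) (fun l => Iff.rfl),
    key (fun l => l.length = n - m ∧ FreeFrom J 0 l ∧ l.sum = (k : ℤ))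
      (hFfin (n - m)) (fun l => Iff.rfl)]
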